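/- For a uniform cyclic binary CA of length n ≥ 5 with a single local rule f : {0,1}^3 → {0,1}, if the global map conserves the number of 1s in every configuration, then f satisfies: (f(0,0,0) = f(1,0,0) and f(0,0,1) = f(1,0,1)) or (f(0,0,0) = f(0,0,1) and f(1,0,0) = f(1,0,1)). -/

import Mathlib

/-- Global map of a non-uniform cyclic CA of length `n`:
cell `i` updates via its local rule applied to `(x (i-1), x i, x (i+1))`, indices mod `n`. -/
def caStep (n : ℕ) [NeZero n] (f : Fin n → Bool → Bool → Bool → Bool)
    (x : Fin n → Bool) : Fin n → Bool :=
  fun i => f i (x (i - 1)) (x i) (x (i + 1))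

/-- Number of cells in state `true` (i.e. 1). -/
def onesCount (n : ℕ) (x : Fin n → Bool) : ℕ :=
  (Finset.univ.filter fun i => x i = true).card

/-- The CA conserves the number of 1s in every configuration. -/
def numberConserving (n : ℕ) [NeZero n] (f : Fin n → Bool → Bool → Bool → Bool) : Prop :=
  ∀ x : Fin n → Bool, onesCount n (caStep n f x) = onesCount n x

/-- The elementary CA rule with Wolfram number `R`. -/
def wolfram (R : ℕ) (a b c : Bool) : Bool :=
  R.testBit (4 * a.toNat + 2 * b.toNat + c.toNat)

theorem stmt1 (n : ℕ) (hn : 5 ≤ n) [NeZero n] (f : Bool → Bool → Bool → Bool)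
    (h : numberConserving n (fun _ => f)) :
    (f false false false = f true false false ∧ f false false true = f true false true) ∨
    (f false false false = f false false true ∧ f true false false = f true false true) := by
  have hsum : ∀ x : Fin n → Bool, onesCount n x = ∑ i, (x i).toNat := by
    intro x
    unfold onesCount
    rw [Finset.card_filter]
    apply Finset.sum_congr rfl
    intro i _
    cases x i <;> simp
  have h000 : f false false false = false := by
    by_contra hne
    rw [Bool.not_eq_false] at hne
    have := h (fun _ => false)
    simp [onesCount, caStep, hne, Finset.filter_true_of_mem] at this
    omega
  have hv1 : (1 : Fin n).val = 1 := by
    rw [Fin.val_one']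
    exact Nat.mod_eq_of_lt (by omega)
  have hsub : ∀ i : Fin n, (i - 1).val = (i.val + (n - 1)) % n := by
    intro i
    rw [Fin.sub_def, hv1]
    simp [Nat.add_comm]
  have hadd : ∀ i : Fin n, (i + 1).val = (i.val + 1) % n := by
    intro i
    rw [Fin.add_def, hv1]
  have key : ∀ (S : Finset (Fin n)) (x : Fin n → Bool),
      (∀ i : Fin n, i ∉ S → x (i - 1) = false ∧ x i = false ∧ x (i + 1) = false) →
      (∑ i ∈ S, (f (x (i-1)) (x i) (x (i+1))).toNat) = ∑ i ∈ S, (x i).toNat := by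
    intro S x hx
    have h1 : onesCount n (caStep n (fun _ => f) x)
        = ∑ i ∈ S, (f (x (i-1)) (x i) (x (i+1))).toNat := by
      rw [hsum]
      refine (Finset.sum_subset (Finset.subset_univ S) ?_).symm
      intro i _ hi
      obtain ⟨a, b, c⟩ := hx i hi
      simp [caStep, a, b, c, h000]
    have h2 : onesCount n x = ∑ i ∈ S, (x i).toNat := by
      rw [hsum]
      refine (Finset.sum_subset (Finset.subset_univ S) ?_).symm
      intro i _ hi
      simp [(hx i hi).2.1]
    rw [← h1, ← h2, h x]
  have p0 : (0:ℕ) < n := by omega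
  have p1 : (1:ℕ) < n := by omega
  have p2 : (2:ℕ) < n := by omega
  have p3 : (3:ℕ) < n := by omega
  have p4 : (4:ℕ) < n := by omega
  set i0 : Fin n := ⟨0, p0⟩ with hi0
  set i1 : Fin n := ⟨1, p1⟩ with hi1
  set i2 : Fin n := ⟨2, p2⟩ with hi2
  set i3 : Fin n := ⟨3, p3⟩ with hi3
  set i4 : Fin n := ⟨4, p4⟩ with hi4
  -- values of shifted indices
  have w0m : (i0 - 1 : Fin n).val = n - 1 := by
    rw [hsub]; simp only [hi0]
    rw [Nat.zero_add, Nat.mod_eq_of_lt (by omega)]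
  have w0p : (i0 + 1 : Fin n).val = 1 := by
    rw [hadd]; simp only [hi0]
    exact Nat.mod_eq_of_lt (by omega)
  have w1m : (i1 - 1 : Fin n).val = 0 := by
    rw [hsub]; simp only [hi1]
    rw [show 1 + (n-1) = n from by omega, Nat.mod_self]
  have w1p : (i1 + 1 : Fin n).val = 2 := by
    rw [hadd]; simp only [hi1]
    exact Nat.mod_eq_of_lt (by omega)
  have w2m : (i2 - 1 : Fin n).val = 1 := by
    rw [hsub]; simp only [hi2]
    rw [show 2 + (n-1) = 1 + n from by omega, Nat.add_mod_right]
    exact Nat.mod_eq_of_lt (by omega)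
  have w2p : (i2 + 1 : Fin n).val = 3 := by
    rw [hadd]; simp only [hi2]
    exact Nat.mod_eq_of_lt (by omega)
  have w3m : (i3 - 1 : Fin n).val = 2 := by
    rw [hsub]; simp only [hi3]
    rw [show 3 + (n-1) = 2 + n from by omega, Nat.add_mod_right]
    exact Nat.mod_eq_of_lt (by omega)
  have w3p : (i3 + 1 : Fin n).val = 4 := by
    rw [hadd]; simp only [hi3]
    exact Nat.mod_eq_of_lt (by omega)
  have w4m : (i4 - 1 : Fin n).val = 3 := by
    rw [hsub]; simp only [hi4]
    rw [show 4 + (n-1) = 3 + n from by omega, Nat.add_mod_right]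
    exact Nat.mod_eq_of_lt (by omega)
  have w4p : (i4 + 1 : Fin n).val ≠ 1 ∧ (i4 + 1 : Fin n).val ≠ 3 := by
    rw [hadd]; simp only [hi4]
    rcases Nat.lt_or_ge 5 n with hlt | hge
    · rw [Nat.mod_eq_of_lt (by omega)]; omega
    · rw [show (4:ℕ) + 1 = n from by omega, Nat.mod_self]; omega
  -- single 1 at position 1
  have E1 : (f false false true).toNat + (f false true false).toNat
      + (f true false false).toNat = 1 := by
    have := key {i0, i1, i2} (fun i => decide (i.val = 1)) ?_
    · rw [Finset.sum_insert (by simp [hi0, hi1, hi2, Fin.ext_iff]),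
          Finset.sum_insert (by simp [hi1, hi2, Fin.ext_iff]),
          Finset.sum_singleton] at this
      rw [Finset.sum_insert (by simp [hi0, hi1, hi2, Fin.ext_iff]),
          Finset.sum_insert (by simp [hi1, hi2, Fin.ext_iff]),
          Finset.sum_singleton] at this
      have hne1 : n - 1 ≠ 1 := by omega
      simp only [w0m, w0p, w1m, w1p, w2m, w2p] at this
      simp [w0m, w0p, w1m, w1p, w2m, w2p, hi0, hi1, hi2, hne1] at this
      omega
    · intro i hi
      simp only [Finset.mem_insert, Finset.mem_singleton, hi0, hi1, hi2, Fin.ext_iff] at hi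
      push_neg at hi
      obtain ⟨q0, q1, q2⟩ := hi
      have hvlt := i.isLt
      refine ⟨?_, ?_, ?_⟩
      · simp only [hsub, decide_eq_false_iff_not]
        rw [show (i.val + (n-1)) % n = i.val - 1 from by
          rw [show i.val + (n-1) = (i.val - 1) + n from by omega, Nat.add_mod_right,
            Nat.mod_eq_of_lt (by omega)]]
        omega
      · simp only [decide_eq_false_iff_not]; omega
      · simp only [hadd, decide_eq_false_iff_not]
        rcases Nat.lt_or_ge (i.val + 1) n with hlt | hge
        · rw [Nat.mod_eq_of_lt hlt]; omega
        · rw [show i.val + 1 = n from by omega, Nat.mod_self]; omega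
  -- 1s at positions 1 and 3
  have E2 : (f false false true).toNat + (f false true false).toNat
      + (f true false true).toNat + (f false true false).toNat
      + (f true false false).toNat = 2 := by
    have := key {i0, i1, i2, i3, i4} (fun i => decide (i.val = 1 ∨ i.val = 3)) ?_
    · rw [Finset.sum_insert (by simp [hi0, hi1, hi2, hi3, hi4, Fin.ext_iff]),
          Finset.sum_insert (by simp [hi1, hi2, hi3, hi4, Fin.ext_iff]),
          Finset.sum_insert (by simp [hi2, hi3, hi4, Fin.ext_iff]),
          Finset.sum_insert (by simp [hi3, hi4, Fin.ext_iff]),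
          Finset.sum_singleton] at this
      rw [Finset.sum_insert (by simp [hi0, hi1, hi2, hi3, hi4, Fin.ext_iff]),
          Finset.sum_insert (by simp [hi1, hi2, hi3, hi4, Fin.ext_iff]),
          Finset.sum_insert (by simp [hi2, hi3, hi4, Fin.ext_iff]),
          Finset.sum_insert (by simp [hi3, hi4, Fin.ext_iff]),
          Finset.sum_singleton] at this
      have hne1 : n - 1 ≠ 1 := by omega
      have hne3 : n - 1 ≠ 3 := by omega
      simp only [w0m, w0p, w1m, w1p, w2m, w2p, w3m, w3p, w4m, w4p.1, w4p.2] at this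
      simp [w0m, w0p, w1m, w1p, w2m, w2p, w3m, w3p, w4m, w4p.1, w4p.2,
        hi0, hi1, hi2, hi3, hi4, hne1, hne3] at this
      omega
    · intro i hi
      simp only [Finset.mem_insert, Finset.mem_singleton, hi0, hi1, hi2, hi3, hi4,
        Fin.ext_iff] at hi
      push_neg at hi
      obtain ⟨q0, q1, q2, q3, q4⟩ := hi
      have hvlt := i.isLt
      refine ⟨?_, ?_, ?_⟩
      · simp only [hsub, decide_eq_false_iff_not]
        rw [show (i.val + (n-1)) % n = i.val - 1 from by
          rw [show i.val + (n-1) = (i.val - 1) + n from by omega, Nat.add_mod_right,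
            Nat.mod_eq_of_lt (by omega)]]
        omega
      · simp only [decide_eq_false_iff_not]; omega
      · simp only [hadd, decide_eq_false_iff_not]
        rcases Nat.lt_or_ge (i.val + 1) n with hlt | hge
        · rw [Nat.mod_eq_of_lt hlt]; omega
        · rw [show i.val + 1 = n from by omega, Nat.mod_self]; omega
  -- conclude by case analysis
  rcases hb1 : f false false true <;> rcases hb2 : f false true false <;>
    rcases hb3 : f true false false <;> rcases hb4 : f true false true <;>
      simp_all
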